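/- arXiv:1505.01657 — 3 statements merged into one kernel-verified Lean document; each statement's English description precedes it below -/
import Mathlib

section
/- For z_1,...,z_N distinct elements of a field and 1 ≤ α ≤ N, the sum over all α-element subsets I of {1,...,N} of the product ∏_{i∈I, j∉I} z_i/(z_i - z_j) equals 1. -/
open Finset Polynomial

namespace Stmt2Aux

variable {K : Type*} [Field K] [DecidableEq K]

/-- The summand, for `I ⊆ s` (all elements of `s` regarded as distinct nodes). -/
def cc (s I : Finset K) : K := ∏ x ∈ I, ∏ y ∈ s \ I, x / (x - y)

lemma cc_insert_not_mem {a : K} {s I : Finset K} (ha : a ∉ s) (hI : I ⊆ s) :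
    cc (insert a s) I = cc s I * ∏ x ∈ I, x / (x - a) := by
  have haI : a ∉ I := fun h => ha (hI h)
  have h1 : insert a s \ I = insert a (s \ I) := insert_sdiff_of_notMem _ haI
  have h2 : a ∉ s \ I := fun h => ha (mem_sdiff.mp h).1
  unfold cc
  rw [h1]
  rw [show (∏ x ∈ I, ∏ y ∈ insert a (s \ I), x / (x - y))
      = ∏ x ∈ I, ((x / (x - a)) * ∏ y ∈ s \ I, x / (x - y)) from
    prod_congr rfl fun x _ => prod_insert h2]
  rw [prod_mul_distrib, mul_comm]

lemma cc_insert_insert {a : K} {s I : Finset K} (ha : a ∉ s) (hI : I ⊆ s) :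
    cc (insert a s) (insert a I) = cc s I * ∏ y ∈ s \ I, a / (a - y) := by
  have haI : a ∉ I := fun h => ha (hI h)
  have h1 : insert a s \ insert a I = s \ I := by
    ext y
    simp only [mem_sdiff, mem_insert, not_or]
    constructor
    · rintro ⟨hy1 | hy1, hy2, hy3⟩
      · exact absurd hy1 hy2
      · exact ⟨hy1, hy3⟩
    · rintro ⟨hy1, hy2⟩
      exact ⟨Or.inr hy1, fun h => ha (h ▸ hy1), hy2⟩
  unfold cc
  rw [h1, prod_insert haI, mul_comm]

/-- The key cancellation: evaluating the polynomial identity at a node `y₀ ∈ t`,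
the two paired terms cancel. -/
lemma pair_eq_zero (α : ℕ) (t J : Finset K) (y₀ : K) (hy₀ : y₀ ∈ t)
    (hJ : J ⊆ t.erase y₀) (hcard : J.card = α) (hαM : α + 1 ≤ t.card) :
    cc t (insert y₀ J) * ((-1 : K) ^ (α + 1) * ∏ x ∈ insert y₀ J, x) *
        ∏ y ∈ t \ insert y₀ J, (y₀ - y)
      + cc t J * (y₀ ^ (t.card - α) * ∏ x ∈ J, (y₀ - x)) = 0 := by
  have hyJ : y₀ ∉ J := fun h => (notMem_erase y₀ t) (hJ h)
  have hJt : J ⊆ t := hJ.trans (erase_subset _ _)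
  set W := t \ insert y₀ J with hW
  have hyW : y₀ ∉ W := by simp [hW]
  have hWne : ∀ y ∈ W, y₀ - y ≠ 0 := fun y hy => sub_ne_zero.mpr fun h => hyW (h ▸ hy)
  have hJne : ∀ x ∈ J, x - y₀ ≠ 0 := fun x hx => sub_ne_zero.mpr fun h => hyJ (h ▸ hx)
  have hsub : insert y₀ J ⊆ t := insert_subset hy₀ hJt
  have hsd : t \ J = insert y₀ W := by
    rw [hW]
    ext y
    simp only [mem_sdiff, mem_insert, not_or]
    constructor
    · rintro ⟨hy1, hy2⟩
      by_cases h : y = y₀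
      · exact Or.inl h
      · exact Or.inr ⟨hy1, h, hy2⟩
    · rintro (rfl | ⟨hy1, _, hy3⟩)
      · exact ⟨hy₀, hyJ⟩
      · exact ⟨hy1, hy3⟩
  have hWcard : W.card + 1 = t.card - α := by
    have h1 : W.card = t.card - (insert y₀ J).card := card_sdiff_of_subset hsub
    have h2 : (insert y₀ J).card = α + 1 := by rw [card_insert_of_notMem hyJ, hcard]
    omega
  have hA : cc t (insert y₀ J)
      = (∏ y ∈ W, y₀ / (y₀ - y)) * ∏ x ∈ J, ∏ y ∈ W, x / (x - y) := by
    unfold cc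
    rw [← hW, prod_insert hyJ]
  have hB : cc t J = (∏ x ∈ J, x / (x - y₀)) * ∏ x ∈ J, ∏ y ∈ W, x / (x - y) := by
    unfold cc
    rw [hsd]
    rw [show (∏ x ∈ J, ∏ y ∈ insert y₀ W, x / (x - y))
        = ∏ x ∈ J, ((x / (x - y₀)) * ∏ y ∈ W, x / (x - y)) from
      prod_congr rfl fun x _ => prod_insert hyW]
    rw [prod_mul_distrib]
  have h1 : (∏ y ∈ W, y₀ / (y₀ - y)) * (∏ y ∈ W, (y₀ - y)) = y₀ ^ W.card := by
    rw [← prod_mul_distrib,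
      prod_congr rfl fun y hy => div_mul_cancel₀ y₀ (hWne y hy), prod_const]
  have h2 : (∏ x ∈ J, x / (x - y₀)) * (∏ x ∈ J, (y₀ - x)) = (-1 : K) ^ α * ∏ x ∈ J, x := by
    rw [← prod_mul_distrib,
      prod_congr rfl (g := fun x => (-1 : K) * x) fun x hx => by
        rw [show y₀ - x = -(x - y₀) from by ring, mul_neg, div_mul_cancel₀ _ (hJne x hx)]
        ring,
      prod_mul_distrib, prod_const, hcard]
  have h3 : ∏ x ∈ insert y₀ J, x = y₀ * ∏ x ∈ J, x := prod_insert hyJ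
  rw [hA, hB, h3, ← hWcard, pow_succ (-1 : K) α, pow_succ y₀ W.card]
  linear_combination (((-1 : K) ^ α * -1) * (y₀ * ∏ x ∈ J, x)
      * (∏ x ∈ J, ∏ y ∈ W, x / (x - y))) * h1
    + ((∏ x ∈ J, ∏ y ∈ W, x / (x - y)) * (y₀ ^ W.card * y₀)) * h2

lemma main (α : ℕ) : ∀ s : Finset K, α ≤ s.card →
    ∑ I ∈ s.powersetCard α, cc s I = 1 := by
  induction α with
  | zero =>
    intro s _
    simp [cc]
  | succ α ih =>
    intro s hs
    rcases eq_or_lt_of_le hs with heq | hlt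
    · rw [heq, powersetCard_self, sum_singleton]
      unfold cc
      rw [sdiff_self]
      simp
    · -- pick a point `a ∈ s` and set `t := s.erase a`
      have hne : s.Nonempty := card_pos.mp (by omega)
      obtain ⟨a, ha_mem⟩ := hne
      set t := s.erase a with ht
      have ha : a ∉ t := notMem_erase a s
      have hins : insert a t = s := insert_erase ha_mem
      have hM : α + 1 ≤ t.card := by
        rw [ht, card_erase_of_mem ha_mem]; omega
      have hαM : α ≤ t.card := by omega
      set M := t.card with hMdef
      -- the two polynomial sums
      set P1 : Polynomial K := ∑ I ∈ t.powersetCard (α + 1),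
          C (cc t I * ((-1 : K) ^ (α + 1) * ∏ x ∈ I, x)) * ∏ y ∈ t \ I, (X - C y) with hP1
      set P2 : Polynomial K := ∑ I ∈ t.powersetCard α,
          C (cc t I) * (X ^ (M - α) * ∏ x ∈ I, (X - C x)) with hP2
      set Q : Polynomial K := ∏ y ∈ t, (X - C y) with hQ
      have hQmonic : Q.Monic := monic_prod_of_monic _ _ fun y _ => monic_X_sub_C y
      have hQdeg : Q.natDegree = M := by
        rw [hQ, natDegree_prod _ _ fun y _ => X_sub_C_ne_zero y]
        simp [natDegree_X_sub_C, hMdef]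
      -- degree facts for pieces
      have hprod_deg : ∀ I : Finset K, I ⊆ t →
          (∏ y ∈ t \ I, (X - C y) : Polynomial K).natDegree = M - I.card := by
        intro I hI
        rw [natDegree_prod _ _ fun y _ => X_sub_C_ne_zero y]
        simp only [natDegree_X_sub_C]
        rw [sum_const, smul_eq_mul, mul_one, card_sdiff_of_subset hI]
      have hprodI_deg : ∀ I : Finset K,
          (∏ x ∈ I, (X - C x) : Polynomial K).natDegree = I.card := by
        intro I
        rw [natDegree_prod _ _ fun y _ => X_sub_C_ne_zero y]
        simp [natDegree_X_sub_C]
      -- second-sum inner polynomial is monic of degree M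
      have hq2 : ∀ I ∈ t.powersetCard α,
          ((X : Polynomial K) ^ (M - α) * ∏ x ∈ I, (X - C x)).Monic ∧
          ((X : Polynomial K) ^ (M - α) * ∏ x ∈ I, (X - C x)).natDegree = M := by
        intro I hI
        obtain ⟨hIt, hIc⟩ := mem_powersetCard.mp hI
        have hmon : ((X : Polynomial K) ^ (M - α) * ∏ x ∈ I, (X - C x)).Monic :=
          (monic_X_pow _).mul (monic_prod_of_monic _ _ fun y _ => monic_X_sub_C y)
        refine ⟨hmon, ?_⟩
        rw [natDegree_mul (pow_ne_zero _ X_ne_zero) (by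
          exact (monic_prod_of_monic _ _ fun y _ => monic_X_sub_C y).ne_zero),
          natDegree_X_pow, hprodI_deg, hIc]
        omega
      -- natDegree bounds
      have hP1deg : P1.natDegree ≤ M := by
        apply natDegree_sum_le_of_forall_le
        intro I hI
        obtain ⟨hIt, hIc⟩ := mem_powersetCard.mp hI
        refine (natDegree_mul_le).trans ?_
        rw [natDegree_C, hprod_deg I hIt]
        omega
      have hP2deg : P2.natDegree ≤ M := by
        apply natDegree_sum_le_of_forall_le
        intro I hI
        refine (natDegree_mul_le).trans ?_
        rw [natDegree_C, (hq2 I hI).2]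
        omega
      -- coefficient M
      have hcoeffP1 : P1.coeff M = 0 := by
        rw [hP1, finset_sum_coeff]
        apply sum_eq_zero
        intro I hI
        obtain ⟨hIt, hIc⟩ := mem_powersetCard.mp hI
        rw [coeff_C_mul]
        rw [coeff_eq_zero_of_natDegree_lt (by rw [hprod_deg I hIt, hIc]; omega), mul_zero]
      have hcoeffP2 : P2.coeff M = 1 := by
        rw [hP2, finset_sum_coeff]
        have : ∀ I ∈ t.powersetCard α,
            (C (cc t I) * (X ^ (M - α) * ∏ x ∈ I, (X - C x))).coeff M = cc t I := by
          intro I hI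
          rw [coeff_C_mul]
          have h1 := (hq2 I hI).1.coeff_natDegree
          rw [(hq2 I hI).2] at h1
          rw [h1, mul_one]
        rw [sum_congr rfl this]
        exact ih t hαM
      have hcoeffQ : Q.coeff M = 1 := by
        have := hQmonic.coeff_natDegree
        rwa [hQdeg] at this
      -- evaluation at nodes
      have heval0 : ∀ y₀ ∈ t, (P1 + P2 - Q).eval y₀ = 0 := by
        intro y₀ hy₀
        have hQ0 : Q.eval y₀ = 0 := by
          rw [hQ, eval_prod]
          exact prod_eq_zero hy₀ (by simp)
        have hE1 : P1.eval y₀ = ∑ I ∈ t.powersetCard (α + 1),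
            cc t I * ((-1 : K) ^ (α + 1) * ∏ x ∈ I, x) * ∏ y ∈ t \ I, (y₀ - y) := by
          rw [hP1, eval_finset_sum]
          refine sum_congr rfl fun I _ => ?_
          rw [eval_mul, eval_C, eval_prod]
          simp
        have hE2 : P2.eval y₀ = ∑ I ∈ t.powersetCard α,
            cc t I * (y₀ ^ (M - α) * ∏ x ∈ I, (y₀ - x)) := by
          rw [hP2, eval_finset_sum]
          refine sum_congr rfl fun I _ => ?_
          rw [eval_mul, eval_C, eval_mul, eval_pow, eval_X, eval_prod]
          simp
        rw [eval_sub, eval_add, hE1, hE2, hQ0, sub_eq_zero]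
        -- split both sums along membership of y₀
        set u := t.erase y₀ with hu
        have hyu : y₀ ∉ u := notMem_erase y₀ t
        have huins : insert y₀ u = t := insert_erase hy₀
        -- first sum: terms not containing y₀ vanish
        have hsplit1 : ∑ I ∈ t.powersetCard (α + 1),
            cc t I * ((-1 : K) ^ (α + 1) * ∏ x ∈ I, x) * ∏ y ∈ t \ I, (y₀ - y)
            = ∑ J ∈ u.powersetCard α,
              cc t (insert y₀ J) * ((-1 : K) ^ (α + 1) * ∏ x ∈ insert y₀ J, x) *
                ∏ y ∈ t \ insert y₀ J, (y₀ - y) := by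
          rw [← huins, powersetCard_succ_insert hyu]
          rw [sum_union (by
            rw [disjoint_right]
            intro I hI hI'
            obtain ⟨J, hJ, rfl⟩ := mem_image.mp hI
            exact hyu ((mem_powersetCard.mp hI').1 (mem_insert_self y₀ J)))]
          rw [sum_image (by
            intro J1 h1 J2 h2 hins'
            have hy1 : y₀ ∉ J1 := fun h => hyu ((mem_powersetCard.mp h1).1 h)
            have hy2 : y₀ ∉ J2 := fun h => hyu ((mem_powersetCard.mp h2).1 h)
            rw [← erase_insert hy1, hins', erase_insert hy2])]
          rw [huins]
          have : ∀ I ∈ u.powersetCard (α + 1),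
              cc t I * ((-1 : K) ^ (α + 1) * ∏ x ∈ I, x) * ∏ y ∈ t \ I, (y₀ - y) = 0 := by
            intro I hI
            obtain ⟨hIu, _⟩ := mem_powersetCard.mp hI
            have hy₀mem : y₀ ∈ t \ I := mem_sdiff.mpr ⟨hy₀, fun h => hyu (hIu h)⟩
            rw [prod_eq_zero hy₀mem (by ring), mul_zero]
          rw [sum_congr rfl this, sum_const, smul_zero, zero_add]
        -- second sum: terms containing y₀ vanish
        have hsplit2 : ∑ I ∈ t.powersetCard α,
            cc t I * (y₀ ^ (M - α) * ∏ x ∈ I, (y₀ - x))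
            = ∑ J ∈ u.powersetCard α,
              cc t J * (y₀ ^ (M - α) * ∏ x ∈ J, (y₀ - x)) := by
          symm
          apply sum_subset
          · intro I hI
            obtain ⟨hIu, hIc⟩ := mem_powersetCard.mp hI
            exact mem_powersetCard.mpr ⟨hIu.trans (erase_subset _ _), hIc⟩
          · intro I hIt' hIu'
            obtain ⟨hIt2, hIc⟩ := mem_powersetCard.mp hIt'
            have hy₀I : y₀ ∈ I := by
              by_contra hy₀I
              exact hIu' (mem_powersetCard.mpr ⟨(subset_erase).mpr ⟨hIt2, hy₀I⟩, hIc⟩)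
            rw [prod_eq_zero hy₀I (by ring), mul_zero, mul_zero]
        rw [hsplit1, hsplit2, ← sum_add_distrib]
        apply sum_eq_zero
        intro J hJ
        obtain ⟨hJu, hJc⟩ := mem_powersetCard.mp hJ
        exact pair_eq_zero α t J y₀ hy₀ (hu ▸ hJu) hJc hM
      -- conclude the polynomial identity
      have key : P1 + P2 = Q := by
        have hDdeg : (P1 + P2 - Q).natDegree ≤ M := by
          refine (natDegree_sub_le _ _).trans (max_le ?_ (le_of_eq hQdeg))
          exact (natDegree_add_le _ _).trans (max_le hP1deg hP2deg)
        have hDcoeff : (P1 + P2 - Q).coeff M = 0 := by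
          rw [coeff_sub, coeff_add, hcoeffP1, hcoeffP2, hcoeffQ]
          ring
        by_cases hD : P1 + P2 - Q = 0
        · exact sub_eq_zero.mp hD
        · exfalso
          apply hD
          apply eq_zero_of_natDegree_lt_card_of_eval_eq_zero' _ t heval0
          rcases lt_or_eq_of_le hDdeg with h | h
          · exact h
          · exfalso
            have hlc := leadingCoeff_ne_zero.mpr hD
            rw [leadingCoeff, h] at hlc
            exact hlc hDcoeff
      -- evaluate the identity at `a`
      have hane : ∀ y ∈ t, a - y ≠ 0 := fun y hy => sub_ne_zero.mpr fun h => ha (h ▸ hy)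
      have hV : (∏ y ∈ t, (a - y)) ≠ 0 := prod_ne_zero_iff.mpr hane
      have heval := congrArg (Polynomial.eval a) key
      have hEA : P1.eval a = ∑ I ∈ t.powersetCard (α + 1),
          cc t I * ((-1 : K) ^ (α + 1) * ∏ x ∈ I, x) * ∏ y ∈ t \ I, (a - y) := by
        rw [hP1, eval_finset_sum]
        refine sum_congr rfl fun I _ => ?_
        rw [eval_mul, eval_C, eval_prod]
        simp
      have hEB : P2.eval a = ∑ I ∈ t.powersetCard α,
          cc t I * (a ^ (M - α) * ∏ x ∈ I, (a - x)) := by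
        rw [hP2, eval_finset_sum]
        refine sum_congr rfl fun I _ => ?_
        rw [eval_mul, eval_C, eval_mul, eval_pow, eval_X, eval_prod]
        simp
      have hEQ : Q.eval a = ∏ y ∈ t, (a - y) := by
        rw [hQ, eval_prod]; simp
      rw [eval_add, hEA, hEB, hEQ] at heval
      -- now massage the goal
      rw [← hins, powersetCard_succ_insert ha]
      rw [sum_union (by
        rw [disjoint_right]
        intro I hI hI'
        obtain ⟨J, hJ, rfl⟩ := mem_image.mp hI
        exact ha ((mem_powersetCard.mp hI').1 (mem_insert_self a J)))]
      rw [sum_image (by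
        intro J1 h1 J2 h2 hins'
        have hy1 : a ∉ J1 := fun h => ha ((mem_powersetCard.mp h1).1 h)
        have hy2 : a ∉ J2 := fun h => ha ((mem_powersetCard.mp h2).1 h)
        rw [← erase_insert hy1, hins', erase_insert hy2])]
      have hrw1 : ∀ I ∈ t.powersetCard (α + 1),
          cc (insert a t) I = cc t I * ∏ x ∈ I, x / (x - a) :=
        fun I hI => cc_insert_not_mem ha (mem_powersetCard.mp hI).1
      have hrw2 : ∀ J ∈ t.powersetCard α,
          cc (insert a t) (insert a J) = cc t J * ∏ y ∈ t \ J, a / (a - y) :=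
        fun J hJ => cc_insert_insert ha (mem_powersetCard.mp hJ).1
      rw [sum_congr rfl hrw1, sum_congr rfl hrw2]
      -- multiply through by the nonzero V
      refine mul_right_cancel₀ hV ?_
      rw [one_mul, add_mul, sum_mul, sum_mul]
      refine Eq.trans ?_ heval
      congr 1
      · refine sum_congr rfl fun I hI => ?_
        obtain ⟨hIt, hIc⟩ := mem_powersetCard.mp hI
        have hxane : ∀ x ∈ I, x - a ≠ 0 := fun x hx =>
          sub_ne_zero.mpr fun h => ha (h ▸ hIt hx)
        rw [← prod_sdiff hIt]
        have h2 : (∏ x ∈ I, x / (x - a)) * (∏ x ∈ I, (a - x))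
            = (-1 : K) ^ (α + 1) * ∏ x ∈ I, x := by
          rw [← prod_mul_distrib,
            prod_congr rfl (g := fun x => (-1 : K) * x) fun x hx => by
              rw [show a - x = -(x - a) from by ring, mul_neg,
                div_mul_cancel₀ _ (hxane x hx)]
              ring,
            prod_mul_distrib, prod_const, hIc]
        linear_combination (cc t I * ∏ y ∈ t \ I, (a - y)) * h2
      · refine sum_congr rfl fun J hJ => ?_
        obtain ⟨hJt, hJc⟩ := mem_powersetCard.mp hJ
        rw [← prod_sdiff hJt]
        have h1 : (∏ y ∈ t \ J, a / (a - y)) * (∏ y ∈ t \ J, (a - y))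
            = a ^ (M - α) := by
          rw [← prod_mul_distrib,
            prod_congr rfl fun y hy => div_mul_cancel₀ a (hane y (mem_sdiff.mp hy).1),
            prod_const, card_sdiff_of_subset hJt, hJc]
        linear_combination (cc t J * ∏ x ∈ J, (a - x)) * h1

end Stmt2Aux

/-- For pairwise distinct `z_1,...,z_N` in a field and `1 ≤ α ≤ N`,
`∑_{|I|=α} ∏_{i∈I, j∉I} z_i/(z_i - z_j) = 1`. -/
theorem stmt_2 {K : Type*} [Field K] (N : ℕ) (α : ℕ) (hα1 : 1 ≤ α) (hαN : α ≤ N)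
    (z : Fin N → K) (hz : Function.Injective z) :
    ∑ I ∈ Finset.powersetCard α (Finset.univ : Finset (Fin N)),
      ∏ i ∈ I, ∏ j ∈ Iᶜ, z i / (z i - z j) = 1 := by
  classical
  set f : Fin N ↪ K := ⟨z, hz⟩ with hf
  have hs : α ≤ (Finset.univ.map f).card := by
    rw [Finset.card_map, Finset.card_univ, Fintype.card_fin]; exact hαN
  have h := Stmt2Aux.main (K := K) α (Finset.univ.map f) hs
  rw [Finset.powersetCard_map, Finset.sum_map] at h
  rw [← h]
  apply Finset.sum_congr rfl
  intro I hI
  rw [show (Finset.mapEmbedding f).toEmbedding I = I.map f from rfl]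
  unfold Stmt2Aux.cc
  rw [Finset.prod_map]
  apply Finset.prod_congr rfl
  intro i hi
  have hsd : (Finset.univ.map f) \ (I.map f) = Iᶜ.map f := by
    rw [Finset.compl_eq_univ_sdiff]
    simp only [Finset.map_eq_image]
    exact (Finset.image_sdiff _ _ f.injective).symm
  rw [hsd, Finset.prod_map]
  rfl
end

section
/- Fix an integer a ≥ 1, a field element q, and pairwise distinct nonzero z_1,...,z_{2a} with z_j ≠ q·z_i for i ≠ j. Then Σ_{(I,J): I⊔J=[1,2a], |I|=|J|=a} a_{I,J}(z)·b_{J,I}(z)·(1 − q^a·z_I/z_J) = Σ_{(I,J): I⊔J=[1,2a], |I|=a+1, |J|=a−1} a_{I,J}(z)·b_{J,I}(z). -/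
open Finset Polynomial

namespace Stmt5

variable {K : Type*} [Field K]

lemma basis_coeff [DecidableEq K] (S : Finset K) (p : K) (hp : p ∈ S) :
    (Lagrange.basis S id p).coeff (S.card - 1) = (∏ r ∈ S.erase p, (p - r))⁻¹ := by
  have hinj : Set.InjOn (id : K → K) S := Function.injective_id.injOn
  have hdeg := Lagrange.natDegree_basis hinj hp
  rw [show (S.card - 1) = (Lagrange.basis S id p).natDegree from hdeg.symm,
    Polynomial.coeff_natDegree]
  unfold Lagrange.basis
  rw [Polynomial.leadingCoeff_prod, ← Finset.prod_inv_distrib]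
  refine Finset.prod_congr rfl fun r hr => ?_
  unfold Lagrange.basisDivisor
  simp only [id_eq]
  rw [Polynomial.leadingCoeff_mul, Polynomial.leadingCoeff_C,
    (Polynomial.monic_X_sub_C (r : K)).leadingCoeff, mul_one]

lemma lagrange_sum_coeff [DecidableEq K] (S : Finset K) (Q : K[X]) (hQ : Q.degree < S.card) :
    ∑ p ∈ S, Q.eval p * (∏ r ∈ S.erase p, (p - r))⁻¹ = Q.coeff (S.card - 1) := by
  have hinj : Set.InjOn (id : K → K) S := Function.injective_id.injOn
  have h := Lagrange.eq_interpolate (f := Q) hinj hQ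
  conv_rhs => rw [h]
  rw [Lagrange.interpolate_apply, Polynomial.finset_sum_coeff]
  refine Finset.sum_congr rfl fun p hp => ?_
  rw [Polynomial.coeff_C_mul, basis_coeff S p hp]
  rfl

lemma sum_insert_zero {ι : Type*} [DecidableEq ι] [DecidableEq K] (B : Finset ι) (v : ι → K)
    (hv : Function.Injective v) (hv0 : ∀ i, v i ≠ 0) (Q : K[X])
    (hQ : Q.degree < ((B.card + 1 : ℕ) : ℕ)) :
    Q.eval 0 * (∏ l ∈ B, (0 - v l))⁻¹
      + ∑ j ∈ B, Q.eval (v j) * (v j * ∏ l ∈ B.erase j, (v j - v l))⁻¹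
      = Q.coeff B.card := by
  have hvinj : ∀ x ∈ B, ∀ y ∈ B, v x = v y → x = y := fun x _ y _ h => hv h
  have h0 : (0:K) ∉ B.image v := by
    simp only [Finset.mem_image, not_exists]
    rintro x ⟨-, h⟩
    exact hv0 x h
  have hcard : (insert (0:K) (B.image v)).card = B.card + 1 := by
    rw [Finset.card_insert_of_notMem h0, Finset.card_image_of_injective _ hv]
  have key := lagrange_sum_coeff (insert (0:K) (B.image v)) Q (by rw [hcard]; exact_mod_cast hQ)
  rw [hcard, Nat.add_sub_cancel] at key
  rw [← key, Finset.sum_insert h0]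
  congr 1
  · rw [Finset.erase_insert h0, Finset.prod_image hvinj]
  · rw [Finset.sum_image hvinj]
    refine Finset.sum_congr rfl fun j hj => ?_
    congr 2
    have h0j : (0:K) ≠ v j := fun h => hv0 j h.symm
    have h0e : (0:K) ∉ (B.erase j).image v := by
      simp only [Finset.mem_image, not_exists]
      rintro x ⟨-, h⟩
      exact hv0 x h
    rw [Finset.erase_insert_of_ne h0j, ← Finset.image_erase hv,
      Finset.prod_insert h0e, Finset.prod_image (fun x _ y _ h => hv h), sub_zero]

section Main

variable {n : ℕ}

/-- atomic weight -/
def psi (q : K) (z : Fin n → K) (i l : Fin n) : K :=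
  z i / (z i - z l) * (z l / (z l - q * z i))

/-- the summand (without the extra factor) -/
def cf (q : K) (z : Fin n → K) (I : Finset (Fin n)) : K :=
  (∏ i ∈ I, ∏ j ∈ Iᶜ, z i / (z i - z j)) * (∏ j ∈ Iᶜ, ∏ i ∈ I, z j / (z j - q * z i))

lemma cf_eq_psi (q : K) (z : Fin n → K) (I : Finset (Fin n)) :
    cf q z I = ∏ i ∈ I, ∏ l ∈ Iᶜ, psi q z i l := by
  rw [cf, Finset.prod_comm (s := Iᶜ) (t := I), ← Finset.prod_mul_distrib]
  refine Finset.prod_congr rfl fun i _ => ?_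
  rw [← Finset.prod_mul_distrib]
  rfl

lemma exchange (q : K) (z : Fin n → K) (A : Finset (Fin n)) (j : Fin n) (hj : j ∉ A) :
    cf q z (insert j A) * ∏ i ∈ A, psi q z i j
      = cf q z A * ∏ l ∈ (insert j A)ᶜ, psi q z j l := by
  rw [cf_eq_psi, cf_eq_psi, Finset.compl_insert, Finset.prod_insert hj]
  have hjc : j ∈ Aᶜ := Finset.mem_compl.mpr hj
  have h : ∀ i ∈ A, ∏ l ∈ Aᶜ, psi q z i l = psi q z i j * ∏ l ∈ Aᶜ.erase j, psi q z i l :=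
    fun i _ => (Finset.mul_prod_erase Aᶜ _ hjc).symm
  rw [Finset.prod_congr rfl h, Finset.prod_mul_distrib]
  ring

variable (a : ℕ) (q : K) (z : Fin (2 * a) → K)

/-- the polynomial used for the partition of unity -/
noncomputable def QI (I : Finset (Fin (2 * a))) : K[X] :=
  C ((-1 : K) ^ a * ((∏ i ∈ I, z i) / ∏ l ∈ Iᶜ, z l)) * ∏ l ∈ Iᶜ, (C (z l) - C q * X)

/-- the "partition of unity" weights -/
noncomputable def MM (j : Fin (2 * a)) (I : Finset (Fin (2 * a))) : K :=
  (QI a q z I).eval (z j) * (z j * ∏ i ∈ I.erase j, (z j - z i))⁻¹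

lemma eval_QI (I : Finset (Fin (2 * a))) (t : K) :
    (QI a q z I).eval t
      = (-1 : K) ^ a * ((∏ i ∈ I, z i) / ∏ l ∈ Iᶜ, z l) * ∏ l ∈ Iᶜ, (z l - q * t) := by
  simp [QI, eval_prod]

lemma natDegree_QI (I : Finset (Fin (2 * a))) : (QI a q z I).natDegree ≤ Iᶜ.card := by
  refine le_trans natDegree_mul_le ?_
  rw [natDegree_C, zero_add]
  refine le_trans (natDegree_prod_le _ _) ?_
  refine le_trans (Finset.sum_le_sum (g := fun _ => 1) fun l _ => ?_) ?_
  · refine le_trans (natDegree_sub_le _ _) ?_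
    simp only [natDegree_C, max_le_iff]
    refine ⟨Nat.zero_le _, ?_⟩
    exact le_trans natDegree_mul_le (by simp [natDegree_X])
  · simp

lemma prod_zero_sub (s : Finset (Fin (2 * a))) (w : Fin (2 * a) → K) :
    ∏ l ∈ s, (0 - w l) = (-1 : K) ^ s.card * ∏ l ∈ s, w l := by
  rw [← Finset.prod_const (-1 : K), ← Finset.prod_mul_distrib]
  exact Finset.prod_congr rfl fun l _ => by ring

variable (hz : Function.Injective z) (hz0 : ∀ i, z i ≠ 0)
  (hzq : ∀ i j, i ≠ j → z j ≠ q * z i)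

include hz hz0 in
lemma sum_MM_eq_one [DecidableEq K] (I : Finset (Fin (2 * a))) (hI : I.card = a + 1) :
    ∑ j ∈ I, MM a q z j I = 1 := by
  have hcompl : Iᶜ.card = a - 1 := by
    rw [Finset.card_compl, hI]
    simp only [Fintype.card_fin]
    omega
  have hdeg : (QI a q z I).natDegree ≤ a - 1 := hcompl ▸ natDegree_QI a q z I
  have key := sum_insert_zero I z hz hz0 (QI a q z I)
    (lt_of_le_of_lt (degree_le_natDegree)
      (by exact_mod_cast lt_of_le_of_lt hdeg (by omega)))
  rw [show (QI a q z I).coeff I.card = 0 from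
    coeff_eq_zero_of_natDegree_lt (lt_of_le_of_lt hdeg (by omega))] at key
  have hPI : (∏ i ∈ I, z i) ≠ 0 := Finset.prod_ne_zero_iff.mpr fun i _ => hz0 i
  have hPC : (∏ l ∈ Iᶜ, z l) ≠ 0 := Finset.prod_ne_zero_iff.mpr fun i _ => hz0 i
  have hterm0 : (QI a q z I).eval 0 * (∏ l ∈ I, (0 - z l))⁻¹ = -1 := by
    rw [eval_QI, prod_zero_sub, hI]
    have h : ∀ l ∈ Iᶜ, z l - q * 0 = z l := fun l _ => by ring
    rw [Finset.prod_congr rfl h]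
    have hm1 : ((-1 : K) ^ a) ≠ 0 := pow_ne_zero _ (by norm_num)
    field_simp
    rw [pow_succ]
    ring
  rw [hterm0] at key
  simp only [MM]
  linear_combination key

/-- the monic polynomial for the per-`A` sum -/
noncomputable def QA (A : Finset (Fin (2 * a))) : K[X] :=
  ∏ i ∈ A, (X - C (q * z i))

lemma eval_QA (A : Finset (Fin (2 * a))) (t : K) :
    (QA a q z A).eval t = ∏ i ∈ A, (t - q * z i) := by
  simp [QA, eval_prod]

lemma natDegree_QA (A : Finset (Fin (2 * a))) : (QA a q z A).natDegree = A.card := by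
  rw [QA, natDegree_prod _ _ fun i _ => X_sub_C_ne_zero _]
  simp only [natDegree_X_sub_C]
  simp

include hz hz0 in
lemma sum_D2 [DecidableEq K] (A : Finset (Fin (2 * a))) (hA : A.card = a) :
    ∑ j ∈ Aᶜ, (QA a q z A).eval (z j) * (z j * ∏ l ∈ Aᶜ.erase j, (z j - z l))⁻¹
      = 1 - q ^ a * (∏ i ∈ A, z i) / (∏ l ∈ Aᶜ, z l) := by
  have hcompl : Aᶜ.card = a := by
    rw [Finset.card_compl, hA]
    simp only [Fintype.card_fin]
    omega
  have hdeg : (QA a q z A).degree < ((Aᶜ.card + 1 : ℕ) : ℕ) := by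
    refine lt_of_le_of_lt degree_le_natDegree ?_
    rw [natDegree_QA, hA, hcompl]
    exact_mod_cast (by omega : a < a + 1)
  have key := sum_insert_zero Aᶜ z hz hz0 (QA a q z A) hdeg
  have hco : (QA a q z A).coeff Aᶜ.card = 1 := by
    rw [hcompl]
    have hmo : (QA a q z A).Monic := monic_prod_of_monic _ _ fun i _ => monic_X_sub_C _
    have := hmo.coeff_natDegree
    rwa [natDegree_QA, hA] at this
  rw [hco] at key
  have hPA : (∏ i ∈ A, z i) ≠ 0 := Finset.prod_ne_zero_iff.mpr fun i _ => hz0 i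
  have hPC : (∏ l ∈ Aᶜ, z l) ≠ 0 := Finset.prod_ne_zero_iff.mpr fun i _ => hz0 i
  have hterm0 : (QA a q z A).eval 0 * (∏ l ∈ Aᶜ, (0 - z l))⁻¹
      = q ^ a * (∏ i ∈ A, z i) / (∏ l ∈ Aᶜ, z l) := by
    rw [eval_QA, prod_zero_sub, prod_zero_sub, hA, hcompl]
    have h1 : ∏ l ∈ A, (q * z l) = q ^ A.card * ∏ l ∈ A, z l := by
      rw [← Finset.prod_const q, ← Finset.prod_mul_distrib]
    rw [h1, hA]
    have hm1 : ((-1 : K) ^ a) ≠ 0 := pow_ne_zero _ (by norm_num)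
    field_simp
  rw [hterm0] at key
  linear_combination key


include hz hz0 hzq in
lemma D1 [DecidableEq K] (A : Finset (Fin (2 * a))) (hA : A.card = a)
    (j : Fin (2 * a)) (hj : j ∈ Aᶜ) :
    MM a q z j (insert j A) * cf q z (insert j A)
      = cf q z A * ((QA a q z A).eval (z j) * (z j * ∏ l ∈ Aᶜ.erase j, (z j - z l))⁻¹) := by
  have hjA : j ∉ A := Finset.mem_compl.mp hj
  have hzj : z j ≠ 0 := hz0 j
  have hcompl : Aᶜ.card = a := by
    rw [Finset.card_compl, hA]
    simp only [Fintype.card_fin]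
    omega
  have hB'card : (Aᶜ.erase j).card = a - 1 := by
    rw [Finset.card_erase_of_mem hj, hcompl]
  have hpsiA : (∏ i ∈ A, psi q z i j) ≠ 0 := by
    refine Finset.prod_ne_zero_iff.mpr fun i hi => ?_
    have hij : i ≠ j := fun h => hjA (h ▸ hi)
    exact mul_ne_zero
      (div_ne_zero (hz0 i) (sub_ne_zero.mpr (hz.ne hij)))
      (div_ne_zero (hz0 j) (sub_ne_zero.mpr (hzq i j hij)))
  have hcf : cf q z (insert j A)
      = cf q z A * (∏ l ∈ Aᶜ.erase j, psi q z j l) * (∏ i ∈ A, psi q z i j)⁻¹ := by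
    rw [eq_mul_inv_iff_mul_eq₀ hpsiA]
    have hex := exchange q z A j hjA
    rwa [Finset.compl_insert] at hex
  rw [MM, Finset.erase_insert hjA, eval_QI, Finset.compl_insert, Finset.prod_insert hjA,
    eval_QA, hcf]
  -- per-element identities
  have hA2 : ∏ i ∈ A, ((-1 : K) * z i * ((z j - z i)⁻¹ * (psi q z i j)⁻¹))
      = ∏ i ∈ A, ((z j - q * z i) * (z j)⁻¹) := by
    refine Finset.prod_congr rfl fun i hi => ?_
    have hij : i ≠ j := fun h => hjA (h ▸ hi)
    have h1 : z i ≠ 0 := hz0 i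
    have h2 : z i - z j ≠ 0 := sub_ne_zero.mpr (hz.ne hij)
    have h3 : z j - z i ≠ 0 := sub_ne_zero.mpr (hz.ne hij.symm)
    have h4 : z j - q * z i ≠ 0 := sub_ne_zero.mpr (hzq i j hij)
    rw [psi]
    field_simp
    ring
  have hB2 : ∏ l ∈ Aᶜ.erase j, ((z l)⁻¹ * (z l - q * z j) * psi q z j l)
      = ∏ l ∈ Aᶜ.erase j, (z j * (z j - z l)⁻¹) := by
    refine Finset.prod_congr rfl fun l hl => ?_
    have hlj : l ≠ j := Finset.ne_of_mem_erase hl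
    have h1 : z l ≠ 0 := hz0 l
    have h2 : z j - z l ≠ 0 := sub_ne_zero.mpr (hz.ne hlj.symm)
    have h3 : z l - q * z j ≠ 0 := sub_ne_zero.mpr (hzq j l hlj.symm)
    rw [psi]
    field_simp
  have eA : ∏ i ∈ A, ((-1 : K) * z i * ((z j - z i)⁻¹ * (psi q z i j)⁻¹))
      = (-1 : K) ^ a * (∏ i ∈ A, z i)
        * ((∏ i ∈ A, (z j - z i))⁻¹ * (∏ i ∈ A, psi q z i j)⁻¹) := by
    rw [Finset.prod_mul_distrib, Finset.prod_mul_distrib, Finset.prod_mul_distrib,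
      Finset.prod_const, hA, Finset.prod_inv_distrib, Finset.prod_inv_distrib]
  have eA' : ∏ i ∈ A, ((z j - q * z i) * (z j)⁻¹)
      = (∏ i ∈ A, (z j - q * z i)) * ((z j) ^ a)⁻¹ := by
    rw [Finset.prod_mul_distrib, Finset.prod_const, hA, inv_pow]
  have eB : ∏ l ∈ Aᶜ.erase j, ((z l)⁻¹ * (z l - q * z j) * psi q z j l)
      = (∏ l ∈ Aᶜ.erase j, z l)⁻¹ * (∏ l ∈ Aᶜ.erase j, (z l - q * z j))
        * (∏ l ∈ Aᶜ.erase j, psi q z j l) := by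
    rw [Finset.prod_mul_distrib, Finset.prod_mul_distrib, Finset.prod_inv_distrib]
  have eB' : ∏ l ∈ Aᶜ.erase j, (z j * (z j - z l)⁻¹)
      = (z j) ^ (a - 1) * (∏ l ∈ Aᶜ.erase j, (z j - z l))⁻¹ := by
    rw [Finset.prod_mul_distrib, Finset.prod_const, hB'card, Finset.prod_inv_distrib]
  have hA3 := (eA.symm.trans hA2).trans eA'
  have hB3 := (eB.symm.trans hB2).trans eB'
  have key : ((-1 : K) ^ a * (∏ i ∈ A, z i)
        * ((∏ i ∈ A, (z j - z i))⁻¹ * (∏ i ∈ A, psi q z i j)⁻¹))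
      * ((∏ l ∈ Aᶜ.erase j, z l)⁻¹ * (∏ l ∈ Aᶜ.erase j, (z l - q * z j))
        * (∏ l ∈ Aᶜ.erase j, psi q z j l))
      = ((∏ i ∈ A, (z j - q * z i)) * ((z j) ^ a)⁻¹)
        * ((z j) ^ (a - 1) * (∏ l ∈ Aᶜ.erase j, (z j - z l))⁻¹) := by
    rw [hA3, hB3]
  have hpow : (z j) ^ (a - 1) * z j = (z j) ^ a := by
    rw [← pow_succ]
    congr 1
    have h2a : 0 < 2 * a := lt_of_le_of_lt (Nat.zero_le _) j.isLt
    omega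
  calc ((-1 : K) ^ a * ((z j * ∏ x ∈ A, z x) / ∏ l ∈ Aᶜ.erase j, z l)
          * ∏ l ∈ Aᶜ.erase j, (z l - q * z j)) * (z j * ∏ i ∈ A, (z j - z i))⁻¹ *
        ((cf q z A * ∏ l ∈ Aᶜ.erase j, psi q z j l) * (∏ i ∈ A, psi q z i j)⁻¹)
      = cf q z A * ((((-1 : K) ^ a * ∏ i ∈ A, z i)
          * ((∏ i ∈ A, (z j - z i))⁻¹ * (∏ i ∈ A, psi q z i j)⁻¹))
        * (((∏ l ∈ Aᶜ.erase j, z l)⁻¹ * ∏ l ∈ Aᶜ.erase j, (z l - q * z j))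
          * ∏ l ∈ Aᶜ.erase j, psi q z j l)) * (z j * (z j)⁻¹) := by
        rw [div_eq_mul_inv, mul_inv]
        ring
    _ = cf q z A * ((∏ i ∈ A, (z j - q * z i)) * (z j ^ a)⁻¹
          * (z j ^ (a - 1) * (∏ l ∈ Aᶜ.erase j, (z j - z l))⁻¹)) * (z j * (z j)⁻¹) := by
        rw [key]
    _ = cf q z A * ((∏ i ∈ A, (z j - q * z i)) * (z j * ∏ l ∈ Aᶜ.erase j, (z j - z l))⁻¹) := by
        rw [← hpow]
        have hP8 : (∏ l ∈ Aᶜ.erase j, (z j - z l)) ≠ 0 :=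
          Finset.prod_ne_zero_iff.mpr fun l hl =>
            sub_ne_zero.mpr (hz.ne (Finset.ne_of_mem_erase hl).symm)
        have hzjp : z j ^ (a - 1) ≠ 0 := pow_ne_zero _ hzj
        field_simp


include hz hz0 hzq in
lemma main [DecidableEq K] :
    ∑ I ∈ Finset.powersetCard a (Finset.univ : Finset (Fin (2 * a))),
      cf q z I * (1 - q ^ a * (∏ i ∈ I, z i) / (∏ j ∈ Iᶜ, z j))
    = ∑ I ∈ Finset.powersetCard (a + 1) (Finset.univ : Finset (Fin (2 * a))), cf q z I := by
  symm
  calc ∑ I ∈ powersetCard (a + 1) (univ : Finset (Fin (2 * a))), cf q z I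
      = ∑ I ∈ powersetCard (a + 1) (univ : Finset (Fin (2 * a))),
          ∑ j ∈ I, cf q z I * MM a q z j I := by
        refine Finset.sum_congr rfl fun I hI => ?_
        rw [← Finset.mul_sum,
          sum_MM_eq_one a q z hz hz0 I (Finset.mem_powersetCard_univ.mp hI), mul_one]
    _ = ∑ A ∈ powersetCard a (univ : Finset (Fin (2 * a))),
          ∑ j ∈ Aᶜ, cf q z (insert j A) * MM a q z j (insert j A) := by
        rw [Finset.sum_sigma', Finset.sum_sigma']
        refine Finset.sum_nbij' (fun x => ⟨x.1.erase x.2, x.2⟩)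
          (fun x => ⟨insert x.2 x.1, x.2⟩) ?_ ?_ ?_ ?_ ?_
        · rintro ⟨I, j⟩ hx
          rw [Finset.mem_sigma] at hx ⊢
          obtain ⟨hI, hj⟩ := hx
          rw [Finset.mem_powersetCard_univ] at hI
          refine ⟨Finset.mem_powersetCard_univ.mpr ?_, ?_⟩
          · rw [Finset.card_erase_of_mem hj, hI]
            omega
          · exact Finset.mem_compl.mpr (Finset.notMem_erase _ _)
        · rintro ⟨A, j⟩ hx
          rw [Finset.mem_sigma] at hx ⊢
          obtain ⟨hA, hj⟩ := hx
          rw [Finset.mem_powersetCard_univ] at hA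
          refine ⟨Finset.mem_powersetCard_univ.mpr ?_, Finset.mem_insert_self _ _⟩
          rw [Finset.card_insert_of_notMem (Finset.mem_compl.mp hj), hA]
        · rintro ⟨I, j⟩ hx
          rw [Finset.mem_sigma] at hx
          simp only [Finset.insert_erase hx.2]
        · rintro ⟨A, j⟩ hx
          rw [Finset.mem_sigma] at hx
          simp only [Finset.erase_insert (Finset.mem_compl.mp hx.2)]
        · rintro ⟨I, j⟩ hx
          rw [Finset.mem_sigma] at hx
          simp only [Finset.insert_erase hx.2]
    _ = ∑ A ∈ powersetCard a (univ : Finset (Fin (2 * a))),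
          cf q z A * (1 - q ^ a * (∏ i ∈ A, z i) / (∏ l ∈ Aᶜ, z l)) := by
        refine Finset.sum_congr rfl fun A hA' => ?_
        have hA : A.card = a := Finset.mem_powersetCard_univ.mp hA'
        have step : ∀ j ∈ Aᶜ, cf q z (insert j A) * MM a q z j (insert j A)
            = cf q z A * ((QA a q z A).eval (z j)
                * (z j * ∏ l ∈ Aᶜ.erase j, (z j - z l))⁻¹) := by
          intro j hj
          rw [mul_comm]
          exact D1 a q z hz hz0 hzq A hA j hj
        rw [Finset.sum_congr rfl step, ← Finset.mul_sum, sum_D2 a q z hz hz0 A hA]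

end Main

end Stmt5


/-- second summation lemma: for `a ≥ 1` and generic `z_1,...,z_{2a}`,
`∑_{|I|=|J|=a} a_{I,J} b_{J,I} (1 − q^a z_I/z_J) = ∑_{|I|=a+1,|J|=a−1} a_{I,J} b_{J,I}`,
where pairs `(I,J)` are disjoint with `I ∪ J = [1,2a]`. -/
theorem stmt_5 {K : Type*} [Field K] (a : ℕ) (ha : 1 ≤ a) (q : K)
    (z : Fin (2 * a) → K) (hz : Function.Injective z) (hz0 : ∀ i, z i ≠ 0)
    (hzq : ∀ i j, i ≠ j → z j ≠ q * z i) :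
    ∑ I ∈ Finset.powersetCard a (Finset.univ : Finset (Fin (2 * a))),
      (∏ i ∈ I, ∏ j ∈ Iᶜ, z i / (z i - z j)) *
        (∏ j ∈ Iᶜ, ∏ i ∈ I, z j / (z j - q * z i)) *
        (1 - q ^ a * (∏ i ∈ I, z i) / (∏ j ∈ Iᶜ, z j))
    = ∑ I ∈ Finset.powersetCard (a + 1) (Finset.univ : Finset (Fin (2 * a))),
        (∏ i ∈ I, ∏ j ∈ Iᶜ, z i / (z i - z j)) *
          (∏ j ∈ Iᶜ, ∏ i ∈ I, z j / (z j - q * z i)) := by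
  classical
  simpa only [Stmt5.cf] using Stmt5.main a q z hz hz0 hzq
end

section
/- For 1 ≤ α ≤ r and 1 ≤ p ≤ r+1−α, the operator 𝒟_{α,−p} annihilates the constant function 1, and 𝒟_{α,0}·1 = v^{−Σ_β Λ_{α,β}}. Equivalently, M_{α,−p}·1 = 0 for 1 ≤ p ≤ r+1−α and M_{α,0}·1 = 1. -/
/-- `Λ_{α,β} = min(α,β)(r+1−max(α,β))` for `α,β ∈ {1,...,r}`, extended by `0` outside. -/
def Lam (r α β : ℕ) : ℤ :=
  if 1 ≤ α ∧ α ≤ r ∧ 1 ≤ β ∧ β ≤ r then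
    (min α β : ℤ) * ((r : ℤ) + 1 - (max α β : ℤ)) else 0

/-- `a_I(z) = ∏_{i∈I, j∉I} z_i/(z_i − z_j)`. -/
noncomputable def aI {K : Type*} [Field K] {N : ℕ} (z : Fin N → K) (I : Finset (Fin N)) : K :=
  ∏ i ∈ I, ∏ j ∈ Iᶜ, z i / (z i - z j)

/-- The generalized (degenerate) Macdonald operator
`𝒟_{α,n} = v^{−Λ_{α,α}n/2 − Σ_β Λ_{α,β}} Σ_{|I|=α} (z_I)^n a_I(z) D_I`, written in terms
of `w = v^{1/2}` (so `v = w²`, `q = v^{−(r+1)} = w^{−2(r+1)}`); `D_I` rescales `z_i` by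
`q·v` for `i ∈ I` and by `v` for `i ∉ I`, i.e. coordinate `i` of `D_I z` is
`v^{|I|}·(q if i∈I else 1)·z_i`. Operators act on functions of `z = (z_1,...,z_{r+1})`. -/
noncomputable def Dop {K : Type*} [Field K] (r : ℕ) (w : K) (α : ℕ) (n : ℤ)
    (f : (Fin (r + 1) → K) → K) : (Fin (r + 1) → K) → K :=
  fun z =>
    w ^ (-(Lam r α α) * n - 2 * ∑ β ∈ Finset.Icc 1 r, Lam r α β) *
      ∑ I ∈ Finset.powersetCard α (Finset.univ : Finset (Fin (r + 1))),
        (∏ i ∈ I, z i) ^ n * aI z I *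
          f (fun i => w ^ ((2 * I.card : ℤ))
              * (if i ∈ I then w ^ (-(2 : ℤ) * ((r : ℤ) + 1)) else 1) * z i)

/-- The raising operator `M_{α,n} = Σ_{|I|=α} (z_I)^n a_I(z) Γ_I`, where `Γ_I`
rescales `z_i ↦ q z_i` for `i ∈ I`. -/
noncomputable def Mop {K : Type*} [Field K] {N : ℕ} (q : K) (α : ℕ) (n : ℤ)
    (f : (Fin N → K) → K) : (Fin N → K) → K :=
  fun z =>
    ∑ I ∈ Finset.powersetCard α (Finset.univ : Finset (Fin N)),
      (∏ i ∈ I, z i) ^ n * aI z I * f (fun i => (if i ∈ I then q else 1) * z i)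


open Finset Matrix Equiv Polynomial



noncomputable def embOf {n k : ℕ} [NeZero n] (S : Finset (Fin n)) : Fin k → Fin n :=
  if h : S.card = k then S.orderEmbOfFin h else fun _ => 0

lemma embOf_apply {n k : ℕ} [NeZero n] (S : Finset (Fin n)) (h : S.card = k) (i : Fin k) :
    embOf S i = S.orderEmbOfFin h i := by simp [embOf, h]

lemma embOf_inj {n k : ℕ} [NeZero n] (S : Finset (Fin n)) (h : S.card = k) :
    Function.Injective (embOf (k := k) S) := by
  intro a b hab
  rw [embOf_apply S h, embOf_apply S h] at hab
  exact (S.orderEmbOfFin h).injective hab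

lemma image_embOf {n k : ℕ} [NeZero n] (S : Finset (Fin n)) (h : S.card = k) :
    Finset.image (embOf (k := k) S) Finset.univ = S := by
  apply Finset.coe_injective
  rw [Finset.coe_image, Finset.coe_univ, Set.image_univ]
  have : embOf (k := k) S = S.orderEmbOfFin h := funext fun i => embOf_apply S h i
  rw [this, Finset.range_orderEmbOfFin]

theorem cauchy_binet {R : Type*} [CommRing R] {k n : ℕ} [NeZero n]
    (A : Matrix (Fin k) (Fin n) R) (B : Matrix (Fin n) (Fin k) R) :
    (A * B).det = ∑ S ∈ Finset.powersetCard k (Finset.univ : Finset (Fin n)),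
      (A.submatrix id (embOf S)).det * (B.submatrix (embOf S) id).det := by
  classical
  -- Step 1: expand by multilinearity
  have h1 : (A * B).det
      = ∑ p : Fin k → Fin n, (∏ a, A a (p a)) * (B.submatrix p id).det := by
    have hrow : (fun a => (A * B) a) = fun a => ∑ i : Fin n, A a i • B i := by
      funext a b
      simp [Matrix.mul_apply, Finset.sum_apply]
    have := (Matrix.detRowAlternating (R := R) (n := Fin k)).toMultilinearMap.map_sum
      (g := fun a i => A a i • B i)
    calc (A * B).det = Matrix.detRowAlternating (fun a => (A*B) a) := rfl
      _ = Matrix.detRowAlternating (fun a => ∑ i : Fin n, A a i • B i) := by rw [hrow]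
      _ = ∑ p : Fin k → Fin n, Matrix.detRowAlternating (fun a => A a (p a) • B (p a)) := this
      _ = ∑ p : Fin k → Fin n, (∏ a, A a (p a)) * (B.submatrix p id).det := by
          refine Finset.sum_congr rfl fun p _ => ?_
          have := (Matrix.detRowAlternating (R := R) (n := Fin k)).toMultilinearMap.map_smul_univ
            (fun a => A a (p a)) (fun a => B (p a))
          exact this
  rw [h1]
  -- Step 2: non-injective terms vanish
  rw [← Finset.sum_filter_of_ne (p := fun p : Fin k → Fin n => Function.Injective p)
    (by intro p _ hne
        by_contra hinj
        apply hne
        obtain ⟨a, b, hab, hne'⟩ : ∃ a b, p a = p b ∧ a ≠ b := by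
          simp only [Function.Injective] at hinj
          push_neg at hinj
          obtain ⟨a, b, h1', h2'⟩ := hinj
          exact ⟨a, b, h1', h2'⟩
        have : (B.submatrix p id).det = 0 :=
          Matrix.det_zero_of_row_eq hne' (by ext j; simp [Matrix.submatrix, hab])
        simp [this])]
  -- Step 3: bijection with (subset, permutation) pairs
  have h3 : ∑ x ∈ ((Finset.powersetCard k (Finset.univ : Finset (Fin n))).sigma
        (fun _ => (Finset.univ : Finset (Perm (Fin k))))),
      (∏ a, A a ((embOf x.1 ∘ x.2) a)) * (B.submatrix (embOf x.1 ∘ x.2) id).det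
      = ∑ p ∈ Finset.univ.filter (fun p : Fin k → Fin n => Function.Injective p),
      (∏ a, A a (p a)) * (B.submatrix p id).det := by
    refine Finset.sum_bij (fun x _ => embOf x.1 ∘ x.2) ?_ ?_ ?_ ?_
    · rintro ⟨S, σ⟩ hx
      simp only [Finset.mem_sigma, Finset.mem_powersetCard] at hx
      have hcard := hx.1.2
      simp only [Finset.mem_filter, Finset.mem_univ, true_and]
      exact (embOf_inj S hcard).comp σ.injective
    · rintro ⟨S, σ⟩ hx ⟨S', σ'⟩ hx' heq
      simp only [Finset.mem_sigma, Finset.mem_powersetCard] at hx hx'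
      have hcard := hx.1.2
      have hcard' := hx'.1.2
      have heq' : embOf (k := k) S ∘ ⇑σ = embOf (k := k) S' ∘ ⇑σ' := heq
      have himgσ : ∀ (τ : Perm (Fin k)), Finset.image (⇑τ) Finset.univ = Finset.univ := by
        intro τ
        ext i
        simp only [Finset.mem_image, Finset.mem_univ, iff_true]
        exact ⟨τ.symm i, by simp⟩
      have hSS : S = S' := by
        have h1' : Finset.image (embOf (k := k) S ∘ ⇑σ) Finset.univ = S := by
          rw [← Finset.image_image, himgσ]
          exact image_embOf S hcard
        have h2' : Finset.image (embOf (k := k) S' ∘ ⇑σ') Finset.univ = S' := by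
          rw [← Finset.image_image, himgσ]
          exact image_embOf S' hcard'
        rw [← h1', ← h2', heq']
      subst hSS
      have hσ : σ = σ' := Equiv.ext fun a => embOf_inj S hcard (congrFun heq' a)
      rw [hσ]
    · intro p hp
      simp only [Finset.mem_filter, Finset.mem_univ, true_and] at hp
      set S : Finset (Fin n) := Finset.image p Finset.univ with hSdef
      have hS : S.card = k := by
        rw [hSdef, Finset.card_image_of_injective _ hp, Finset.card_univ, Fintype.card_fin]
      have hmem : ∀ a, p a ∈ S := fun a => Finset.mem_image_of_mem p (Finset.mem_univ a)
      set σ0 : Fin k → Fin k := fun a => (S.orderIsoOfFin hS).symm ⟨p a, hmem a⟩ with hσ0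
      have hσ0inj : Function.Injective σ0 := by
        intro a b hab
        have h2 : (⟨p a, hmem a⟩ : {x // x ∈ S}) = ⟨p b, hmem b⟩ :=
          (S.orderIsoOfFin hS).symm.injective hab
        exact hp (congrArg Subtype.val h2)
      have hσ0bij : Function.Bijective σ0 := Finite.injective_iff_bijective.mp hσ0inj
      refine ⟨⟨S, Equiv.ofBijective σ0 hσ0bij⟩, ?_, ?_⟩
      · simp only [Finset.mem_sigma, Finset.mem_powersetCard]
        exact ⟨⟨Finset.subset_univ S, hS⟩, Finset.mem_univ _⟩
      · funext a
        simp only [Function.comp_apply, Equiv.ofBijective_apply]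
        rw [embOf_apply S hS]
        show (S.orderIsoOfFin hS ((S.orderIsoOfFin hS).symm ⟨p a, hmem a⟩) : Fin n) = p a
        rw [OrderIso.apply_symm_apply]
    · intro x hx
      rfl
  rw [← h3, Finset.sum_sigma]
  refine Finset.sum_congr rfl fun S hS => ?_
  simp only [Finset.mem_powersetCard] at hS
  have hcard := hS.2
  -- inner sum over permutations
  have key : ∀ σ : Perm (Fin k),
      (∏ a, A a ((embOf S ∘ σ) a)) * (B.submatrix (embOf S ∘ σ) id).det
      = ((Perm.sign σ : ℤ) : R) * ((∏ a, (A.submatrix id (embOf S)) a (σ a))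
          * (B.submatrix (embOf S) id).det) := by
    intro σ
    have hsub : B.submatrix (embOf S ∘ σ) id = (B.submatrix (embOf S) id).submatrix σ id := rfl
    rw [hsub, Matrix.det_permute]
    simp only [Matrix.submatrix_apply, id_eq, Function.comp_apply]
    push_cast
    ring
  rw [Finset.sum_congr rfl (fun σ _ => key σ)]
  have : ∑ σ : Perm (Fin k), ((Perm.sign σ : ℤ) : R) *
      ((∏ a, (A.submatrix id (embOf S)) a (σ a)) * (B.submatrix (embOf S) id).det)
      = (∑ σ : Perm (Fin k), ((Perm.sign σ : ℤ) : R) *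
        ∏ a, (A.submatrix id (embOf S)) a (σ a)) * (B.submatrix (embOf S) id).det := by
    rw [Finset.sum_mul]
    exact Finset.sum_congr rfl fun σ _ => by ring
  rw [this]
  congr 1
  have := Matrix.det_apply (M := (A.submatrix id (embOf S)).transpose)
  rw [← Matrix.det_transpose]
  rw [this]
  refine Finset.sum_congr rfl fun σ _ => ?_
  simp [Matrix.transpose_apply, Units.smul_def, zsmul_eq_mul]



lemma sign_revPerm (α : ℕ) :
    ((Equiv.Perm.sign (Fin.revPerm : Equiv.Perm (Fin α)) : ℤ))
      = (-1) ^ (∑ i : Fin α, (i : ℕ)) := by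
  have hC : ∀ i : Fin α, ((Finset.Ioi i).card) = α - 1 - (i : ℕ) := fun i => Fin.card_Ioi i
  set v : Fin α → ℤ := fun i => (i : ℤ) with hv
  have h1 : Matrix.vandermonde (fun i => v (Fin.rev i))
      = (Matrix.vandermonde v).submatrix Fin.revPerm id := by
    ext i j; simp [Matrix.vandermonde]
  have h2 := Matrix.det_permute (Fin.revPerm : Equiv.Perm (Fin α)) (Matrix.vandermonde v)
  rw [← h1, Matrix.det_vandermonde, Matrix.det_vandermonde] at h2
  have hfac : ∀ i : Fin α, ∀ j ∈ Finset.Ioi i, v (Fin.rev j) - v (Fin.rev i)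
      = -(v j - v i) := by
    intro i j hj
    have hj' : (j : ℕ) < α := j.isLt
    have hi' : (i : ℕ) < α := i.isLt
    simp only [hv, Fin.val_rev]
    push_cast [Nat.cast_sub (by omega : (j:ℕ) + 1 ≤ α), Nat.cast_sub (by omega : (i:ℕ)+1 ≤ α)]
    ring
  have h3 : ∏ i : Fin α, ∏ j ∈ Finset.Ioi i, (v (Fin.rev j) - v (Fin.rev i))
      = (-1) ^ (∑ i : Fin α, (i:ℕ)) * ∏ i : Fin α, ∏ j ∈ Finset.Ioi i, (v j - v i) := by
    calc ∏ i : Fin α, ∏ j ∈ Finset.Ioi i, (v (Fin.rev j) - v (Fin.rev i))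
        = ∏ i : Fin α, ∏ j ∈ Finset.Ioi i, -(v j - v i) := by
          refine Finset.prod_congr rfl fun i _ => Finset.prod_congr rfl fun j hj => hfac i j hj
      _ = ∏ i : Fin α, ((-1) ^ (Finset.Ioi i).card * ∏ j ∈ Finset.Ioi i, (v j - v i)) := by
          refine Finset.prod_congr rfl fun i _ => ?_
          rw [← Finset.prod_const, ← Finset.prod_mul_distrib]
          exact Finset.prod_congr rfl fun j _ => by ring
      _ = (-1) ^ (∑ i : Fin α, (Finset.Ioi i).card)
            * ∏ i : Fin α, ∏ j ∈ Finset.Ioi i, (v j - v i) := by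
          rw [Finset.prod_mul_distrib, Finset.prod_pow_eq_pow_sum]
      _ = (-1) ^ (∑ i : Fin α, (i:ℕ)) * ∏ i : Fin α, ∏ j ∈ Finset.Ioi i, (v j - v i) := by
          congr 2
          rw [Finset.sum_congr rfl fun i _ => hC i]
          rw [Fin.sum_univ_eq_sum_range (fun i => α - 1 - i) α,
            Fin.sum_univ_eq_sum_range (fun i => i) α]
          exact Finset.sum_range_reflect (fun i => i) α
  rw [h3] at h2
  have hP : (∏ i : Fin α, ∏ j ∈ Finset.Ioi i, (v j - v i)) ≠ 0 := by
    apply Finset.prod_ne_zero_iff.mpr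
    intro i _
    apply Finset.prod_ne_zero_iff.mpr
    intro j hj
    have hij : i < j := Finset.mem_Ioi.mp hj
    have : (i : ℕ) < (j : ℕ) := hij
    simp only [hv]
    omega
  exact (mul_right_cancel₀ hP h2).symm

lemma det_antidiag {R : Type*} [CommRing R] {α : ℕ} (M : Matrix (Fin α) (Fin α) R)
    (h0 : ∀ a b : Fin α, (a : ℕ) + (b : ℕ) + 1 < α → M a b = 0) :
    M.det = Equiv.Perm.sign (Fin.revPerm : Equiv.Perm (Fin α)) • ∏ a, M (Fin.rev a) a := by
  rw [Matrix.det_apply]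
  rw [Finset.sum_eq_single (Fin.revPerm : Equiv.Perm (Fin α))]
  · simp
  · intro σ _ hσ
    obtain ⟨a, ha⟩ : ∃ a : Fin α, (σ a : ℕ) + (a : ℕ) + 1 < α := by
      by_contra hc
      push_neg at hc
      have hsum : ∑ a : Fin α, ((σ a : ℕ) + (a : ℕ) + 1) = α * α := by
        have h1 : ∑ a : Fin α, ((σ a : ℕ) + (a : ℕ) + 1)
            = (∑ a : Fin α, (σ a : ℕ)) + (∑ a : Fin α, (a : ℕ)) + α := by
          rw [Finset.sum_add_distrib, Finset.sum_add_distrib]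
          simp [Finset.card_univ, mul_comm]
        have h2 : ∑ a : Fin α, ((σ a : ℕ)) = ∑ a : Fin α, (a : ℕ) :=
          Equiv.sum_comp σ (fun a : Fin α => (a : ℕ))
        have h3 : (∑ a : Fin α, (a : ℕ)) * 2 = α * (α - 1) := by
          rw [Fin.sum_univ_eq_sum_range (fun i => i) α]
          exact Finset.sum_range_id_mul_two α
        have hα : α * α = α * (α - 1) + α := by
          cases α with
          | zero => rfl
          | succ n => simp only [Nat.succ_sub_one]; ring
        omega
      have hall : ∀ a : Fin α, (σ a : ℕ) + (a : ℕ) + 1 = α := by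
        intro a
        by_contra hne
        have hlt : α < (σ a : ℕ) + (a : ℕ) + 1 := lt_of_le_of_ne (hc a) (Ne.symm hne)
        have : ∑ _a : Fin α, α < ∑ a : Fin α, ((σ a : ℕ) + (a : ℕ) + 1) :=
          Finset.sum_lt_sum (fun i _ => hc i) ⟨a, Finset.mem_univ a, hlt⟩
        simp only [Finset.sum_const, Finset.card_univ, Fintype.card_fin, smul_eq_mul] at this
        omega
      apply hσ
      ext a
      have := hall a
      have hrev : ((Fin.rev a : Fin α) : ℕ) = α - 1 - a := by
        rw [Fin.val_rev]; omega
      simp only [Fin.revPerm_apply]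
      omega
    have hz : M (σ a) a = 0 := h0 _ _ ha
    have hprod : ∏ i : Fin α, M (σ i) i = 0 := Finset.prod_eq_zero (Finset.mem_univ a) hz
    rw [hprod, smul_zero]
  · simp



lemma lagrange_sum {K : Type*} [Field K] {N : ℕ} (z : Fin N → K)
    (hz : Function.Injective z) (s : ℕ) (hs : s < N) :
    ∑ i : Fin N, z i ^ s * ∏ j ∈ Finset.univ.erase i, (z i - z j)⁻¹
      = if s = N - 1 then 1 else 0 := by
  classical
  have hinj : Set.InjOn z (Finset.univ : Finset (Fin N)) := fun a _ b _ h => hz h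
  have hdeg : (Polynomial.X ^ s : K[X]).degree < (Finset.univ : Finset (Fin N)).card := by
    rw [Polynomial.degree_X_pow]
    simp only [Finset.card_univ, Fintype.card_fin]
    exact_mod_cast hs
  have hinterp := Lagrange.eq_interpolate (v := z) hinj hdeg
  have hcoeff := congrArg (fun p : K[X] => p.coeff (N - 1)) hinterp
  simp only [Lagrange.interpolate_apply] at hcoeff
  rw [Polynomial.coeff_X_pow] at hcoeff
  rw [Polynomial.finset_sum_coeff] at hcoeff
  have hterm : ∀ i : Fin N,
      (Polynomial.C ((Polynomial.X ^ s : K[X]).eval (z i)) * Lagrange.basis Finset.univ z i).coeff (N - 1)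
        = z i ^ s * ∏ j ∈ Finset.univ.erase i, (z i - z j)⁻¹ := by
    intro i
    rw [Polynomial.coeff_C_mul]
    congr 1
    · simp
    · -- coeff of basis at N-1 equals leading coefficient
      have hnd : (Lagrange.basis Finset.univ z i).natDegree = N - 1 := by
        rw [Lagrange.natDegree_basis hinj (Finset.mem_univ i)]
        simp
      have : (Lagrange.basis Finset.univ z i).coeff (N - 1)
          = (Lagrange.basis Finset.univ z i).leadingCoeff := by
        rw [Polynomial.leadingCoeff, hnd]
      rw [this]
      unfold Lagrange.basis
      rw [Polynomial.leadingCoeff_prod]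
      refine Finset.prod_congr rfl fun j hj => ?_
      have hij : z i ≠ z j := by
        intro h
        exact (Finset.mem_erase.mp hj).1 (hz h.symm)
      unfold Lagrange.basisDivisor
      rw [Polynomial.leadingCoeff_mul, Polynomial.leadingCoeff_C,
        Polynomial.leadingCoeff_X_sub_C, mul_one]
  rw [Finset.sum_congr rfl fun i _ => hterm i] at hcoeff
  rw [← hcoeff]
  by_cases h : s = N - 1 <;> simp [h] <;> omega



lemma key_sum {K : Type*} [Field K] {N α : ℕ} (hα1 : 1 ≤ α) (hαN : α ≤ N)
    (z : Fin N → K) (hz : Function.Injective z) (m : ℕ) (hm : m ≤ N - α) :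
    ∑ S ∈ Finset.powersetCard α (Finset.univ : Finset (Fin N)),
      ((∏ i ∈ S, z i) ^ m * ∏ i ∈ S, ∏ j ∈ Sᶜ, (z i - z j)⁻¹)
      = if m = N - α then 1 else 0 := by
  haveI : NeZero N := ⟨by omega⟩
  set c : Fin N → K := fun i => ∏ j ∈ Finset.univ.erase i, (z i - z j)⁻¹ with hc
  set A : Matrix (Fin α) (Fin N) K :=
    Matrix.of fun a i => (c i * z i ^ m) * z i ^ (a : ℕ) with hA
  set B : Matrix (Fin N) (Fin α) K := Matrix.of fun i b => (- z i) ^ (b : ℕ) with hB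
  -- Step 1: each Cauchy–Binet term is the corresponding term of our sum
  have hterm : ∀ S ∈ Finset.powersetCard α (Finset.univ : Finset (Fin N)),
      (A.submatrix id (embOf S)).det * (B.submatrix (embOf S) id).det
        = (∏ i ∈ S, z i) ^ m * ∏ i ∈ S, ∏ j ∈ Sᶜ, (z i - z j)⁻¹ := by
    intro S hS
    have hcard : S.card = α := (Finset.mem_powersetCard.mp hS).2
    set e : Fin α → Fin N := embOf S with he
    have heinj : Function.Injective e := embOf_inj S hcard
    have himg : Finset.image e Finset.univ = S := image_embOf S hcard
    have T1 : ∀ g : Fin N → K, ∏ i ∈ S, g i = ∏ k : Fin α, g (e k) := by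
      intro g
      rw [← himg, Finset.prod_image (fun x _ y _ h => heinj h)]
    have detA : (A.submatrix id e).det
        = (∏ k : Fin α, (c (e k) * z (e k) ^ m))
          * ∏ k : Fin α, ∏ l ∈ Finset.Ioi k, (z (e l) - z (e k)) := by
      have h1 : A.submatrix id e = Matrix.of fun a k =>
          (c (e k) * z (e k) ^ m) * (Matrix.vandermonde (fun k => z (e k))).transpose a k := by
        ext a k
        simp [hA, Matrix.vandermonde, Matrix.transpose_apply]
      rw [h1, Matrix.det_mul_row, Matrix.det_transpose, Matrix.det_vandermonde]
    have detB : (B.submatrix e id).det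
        = ∏ k : Fin α, ∏ l ∈ Finset.Ioi k, (z (e k) - z (e l)) := by
      have h1 : B.submatrix e id = Matrix.vandermonde (fun k => - z (e k)) := by
        ext k b
        simp [hB, Matrix.vandermonde]
      rw [h1, Matrix.det_vandermonde]
      refine Finset.prod_congr rfl fun k _ => Finset.prod_congr rfl fun l _ => by ring
    rw [detA, detB]
    -- combine the two Vandermonde products
    have hΔ : (∏ k : Fin α, ∏ l ∈ Finset.Ioi k, (z (e l) - z (e k)))
        * (∏ k : Fin α, ∏ l ∈ Finset.Ioi k, (z (e k) - z (e l)))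
        = ∏ k : Fin α, ∏ l ∈ ({k}ᶜ : Finset (Fin α)), (z (e l) - z (e k)) := by
      have h1 : (∏ k : Fin α, ∏ l ∈ Finset.Ioi k, (z (e l) - z (e k)))
          * (∏ k : Fin α, ∏ l ∈ Finset.Ioi k, (z (e k) - z (e l)))
          = ∏ k : Fin α, ∏ l ∈ Finset.Ioi k, ((z (e l) - z (e k)) * (z (e k) - z (e l))) := by
        rw [← Finset.prod_mul_distrib]
        exact Finset.prod_congr rfl fun k _ => (Finset.prod_mul_distrib).symm
      rw [h1]
      have h2 := Finset.prod_prod_Ioi_mul_eq_prod_prod_off_diag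
        (f := fun x y : Fin α => z (e x) - z (e y))
      convert h2 using 2
    -- swap the roles in the off-diagonal product
    have hswap : (∏ k : Fin α, ∏ l ∈ ({k}ᶜ : Finset (Fin α)), (z (e l) - z (e k)))
        = ∏ k : Fin α, ∏ l ∈ ({k}ᶜ : Finset (Fin α)), (z (e k) - z (e l)) := by
      rw [Finset.prod_comm' (s' := fun l => ({l}ᶜ : Finset (Fin α))) (t' := Finset.univ)
        (fun x y => by
          simp only [Finset.mem_univ, true_and, and_true, Finset.mem_compl,
            Finset.mem_singleton]
          exact ne_comm)]
    -- transfer to a product over S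
    have hSprod : ∏ k : Fin α, ∏ l ∈ ({k}ᶜ : Finset (Fin α)), (z (e k) - z (e l))
        = ∏ i ∈ S, ∏ j ∈ S.erase i, (z i - z j) := by
      rw [T1 (g := fun i => ∏ j ∈ S.erase i, (z i - z j))]
      refine Finset.prod_congr rfl fun k _ => ?_
      rw [← himg, ← Finset.image_erase heinj]
      rw [Finset.prod_image (fun x _ y _ h => heinj h)]
      rw [Finset.compl_singleton]
    rw [mul_assoc, hΔ, hswap, hSprod]
    -- now pure algebra over S
    rw [T1 (g := fun i => c i * z i ^ m) |>.symm]
    rw [← Finset.prod_mul_distrib]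
    have hfin : ∀ i ∈ S, (c i * z i ^ m) * ∏ j ∈ S.erase i, (z i - z j)
        = z i ^ m * ∏ j ∈ Sᶜ, (z i - z j)⁻¹ := by
      intro i hi
      have hsetsplit : Finset.univ.erase i = Sᶜ ∪ S.erase i := by
        ext j
        simp only [Finset.mem_erase, Finset.mem_univ, and_true, Finset.mem_union,
          Finset.mem_compl]
        constructor
        · intro hji
          by_cases hjS : j ∈ S
          · right; exact ⟨hji, hjS⟩
          · left; exact hjS
        · rintro (hjS | hj)
          · intro hcontra; exact hjS (hcontra ▸ hi)
          · exact hj.1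
      have hdisj : Disjoint (Sᶜ : Finset (Fin N)) (S.erase i) :=
        Finset.disjoint_left.mpr fun j hj hj' =>
          (Finset.mem_compl.mp hj) ((Finset.mem_erase.mp hj').2)
      have hcsplit : c i = (∏ j ∈ Sᶜ, (z i - z j)⁻¹) * ∏ j ∈ S.erase i, (z i - z j)⁻¹ := by
        rw [hc]
        simp only
        rw [hsetsplit, Finset.prod_union hdisj]
      rw [hcsplit]
      have hQR : (∏ j ∈ S.erase i, (z i - z j)⁻¹) * ∏ j ∈ S.erase i, (z i - z j) = 1 := by
        rw [← Finset.prod_mul_distrib]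
        apply Finset.prod_eq_one
        intro j hj
        exact inv_mul_cancel₀ (sub_ne_zero_of_ne fun h => (Finset.mem_erase.mp hj).1 ((hz h).symm))
      calc (((∏ j ∈ Sᶜ, (z i - z j)⁻¹) * ∏ j ∈ S.erase i, (z i - z j)⁻¹) * z i ^ m)
            * ∏ j ∈ S.erase i, (z i - z j)
          = (z i ^ m * ∏ j ∈ Sᶜ, (z i - z j)⁻¹)
            * ((∏ j ∈ S.erase i, (z i - z j)⁻¹) * ∏ j ∈ S.erase i, (z i - z j)) := by ring
        _ = z i ^ m * ∏ j ∈ Sᶜ, (z i - z j)⁻¹ := by rw [hQR, mul_one]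
    rw [Finset.prod_congr rfl hfin, Finset.prod_mul_distrib, Finset.prod_pow]
  -- Step 2: compute det (A * B) directly
  have hCB := cauchy_binet A B
  have hsum : ∑ S ∈ Finset.powersetCard α (Finset.univ : Finset (Fin N)),
      ((∏ i ∈ S, z i) ^ m * ∏ i ∈ S, ∏ j ∈ Sᶜ, (z i - z j)⁻¹) = (A * B).det := by
    rw [hCB]
    exact (Finset.sum_congr rfl hterm).symm
  rw [hsum]
  have hentry : ∀ a b : Fin α, (A * B) a b
      = (-1) ^ (b : ℕ) * ∑ i : Fin N, z i ^ (m + (a : ℕ) + (b : ℕ)) * c i := by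
    intro a b
    rw [Matrix.mul_apply, Finset.mul_sum]
    refine Finset.sum_congr rfl fun i _ => ?_
    simp only [hA, hB, Matrix.of_apply]
    rw [neg_pow, pow_add, pow_add]
    ring
  have h0 : ∀ a b : Fin α, (a : ℕ) + (b : ℕ) + 1 < α → (A * B) a b = 0 := by
    intro a b hab
    rw [hentry a b]
    have hs : m + (a : ℕ) + (b : ℕ) < N := by omega
    rw [lagrange_sum z hz _ hs, if_neg (by omega), mul_zero]
  have hdet := det_antidiag (A * B) h0
  have hrev : ∀ a : Fin α, ((Fin.rev a : Fin α) : ℕ) = α - 1 - (a : ℕ) := by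
    intro a; rw [Fin.val_rev]; omega
  have hfactor : ∀ a : Fin α, (A * B) (Fin.rev a) a
      = (-1) ^ (a : ℕ) * (if m + (α - 1) = N - 1 then 1 else 0) := by
    intro a
    have hexp : m + ((Fin.rev a : Fin α) : ℕ) + (a : ℕ) = m + (α - 1) := by
      have := hrev a
      have := a.isLt
      omega
    have hs : m + ((Fin.rev a : Fin α) : ℕ) + (a : ℕ) < N := by omega
    rw [hentry (Fin.rev a) a, lagrange_sum z hz _ hs, hexp]
  rw [hdet, Finset.prod_congr rfl fun a _ => hfactor a]
  by_cases hcase : m = N - α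
  · have hcond : m + (α - 1) = N - 1 := by omega
    rw [if_pos hcase]
    have hprod : ∏ a : Fin α, ((-1 : K) ^ (a : ℕ) * (if m + (α - 1) = N - 1 then 1 else 0))
        = (-1 : K) ^ (∑ a : Fin α, (a : ℕ)) := by
      rw [if_pos hcond]
      rw [Finset.prod_congr rfl fun a _ => mul_one _]
      exact Finset.prod_pow_eq_pow_sum _ _ _
    rw [hprod, Units.smul_def, zsmul_eq_mul, sign_revPerm α]
    push_cast
    rw [← pow_add]
    exact Even.neg_one_pow ⟨_, rfl⟩
  · rw [if_neg hcase]
    have hcond : m + (α - 1) ≠ N - 1 := by omega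
    have hprod : ∏ a : Fin α, ((-1 : K) ^ (a : ℕ) * (if m + (α - 1) = N - 1 then 1 else 0))
        = 0 := by
      apply Finset.prod_eq_zero (Finset.mem_univ (⟨0, by omega⟩ : Fin α))
      rw [if_neg hcond, mul_zero]
    rw [hprod, smul_zero]

lemma sum_zpow_aI {K : Type*} [Field K] {N α : ℕ} (hα1 : 1 ≤ α) (hαN : α ≤ N)
    (z : Fin N → K) (hz : Function.Injective z) (hz0 : ∀ i, z i ≠ 0)
    (n : ℤ) (m : ℕ) (hm : m ≤ N - α) (hmn : (m : ℤ) = n + ((N - α : ℕ) : ℤ)) :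
    ∑ S ∈ Finset.powersetCard α (Finset.univ : Finset (Fin N)),
      (∏ i ∈ S, z i) ^ n * aI z S = if m = N - α then 1 else 0 := by
  rw [← key_sum hα1 hαN z hz m hm]
  refine Finset.sum_congr rfl fun S hS => ?_
  have hcard : S.card = α := (Finset.mem_powersetCard.mp hS).2
  have hprodne : (∏ i ∈ S, z i) ≠ 0 := Finset.prod_ne_zero_iff.mpr fun i _ => hz0 i
  have hcompl : (Sᶜ : Finset (Fin N)).card = N - α := by
    rw [Finset.card_compl, hcard]; simp
  have haI : aI z S
      = (∏ i ∈ S, z i) ^ ((N - α : ℕ)) * ∏ i ∈ S, ∏ j ∈ Sᶜ, (z i - z j)⁻¹ := by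
    unfold aI
    have hinner : ∀ i : Fin N, ∏ j ∈ Sᶜ, z i / (z i - z j)
        = z i ^ ((N - α : ℕ)) * ∏ j ∈ Sᶜ, (z i - z j)⁻¹ := by
      intro i
      rw [Finset.prod_congr rfl fun j _ => div_eq_mul_inv (z i) (z i - z j),
        Finset.prod_mul_distrib, Finset.prod_const, hcompl]
    rw [Finset.prod_congr rfl fun i _ => hinner i, Finset.prod_mul_distrib, Finset.prod_pow]
  rw [haI, ← mul_assoc]
  congr 1
  rw [← zpow_natCast (∏ i ∈ S, z i) (N - α), ← zpow_add₀ hprodne, ← hmn, zpow_natCast]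


/-- for `1 ≤ α ≤ r` and `1 ≤ p ≤ r+1−α`, `𝒟_{α,−p}` annihilates
the constant function `1`, and `𝒟_{α,0}·1 = v^{−Σ_β Λ_{α,β}}`; equivalently
`M_{α,−p}·1 = 0` and `M_{α,0}·1 = 1`. -/
theorem stmt_16 {K : Type*} [Field K] (r : ℕ) (hr : 1 ≤ r)
    (w : K) (hw : w ≠ 0) (q : K)
    (α : ℕ) (hα1 : 1 ≤ α) (hα : α ≤ r)
    (z : Fin (r + 1) → K) (hz : Function.Injective z) (hz0 : ∀ i, z i ≠ 0) :
    (∀ p : ℕ, 1 ≤ p → α + p ≤ r + 1 →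
        Dop r w α (-(p : ℤ)) (fun _ => (1 : K)) z = 0) ∧
      Dop r w α 0 (fun _ => (1 : K)) z
        = w ^ (-2 * ∑ β ∈ Finset.Icc 1 r, Lam r α β) ∧
      (∀ p : ℕ, 1 ≤ p → α + p ≤ r + 1 →
        Mop q α (-(p : ℤ)) (fun _ => (1 : K)) z = 0) ∧
      Mop q α 0 (fun _ => (1 : K)) z = 1 := by
  have hαN : α ≤ r + 1 := by omega
  have hzero : ∀ p : ℕ, 1 ≤ p → α + p ≤ r + 1 →
      ∑ I ∈ Finset.powersetCard α (Finset.univ : Finset (Fin (r + 1))),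
        (∏ i ∈ I, z i) ^ (-(p : ℤ)) * aI z I = 0 := by
    intro p hp hpα
    have h := sum_zpow_aI hα1 hαN z hz hz0 (-(p : ℤ)) (r + 1 - α - p)
      (by omega) (by omega)
    rwa [if_neg (by omega)] at h
  have hone : ∑ I ∈ Finset.powersetCard α (Finset.univ : Finset (Fin (r + 1))),
      (∏ i ∈ I, z i) ^ (0 : ℤ) * aI z I = 1 := by
    have h := sum_zpow_aI hα1 hαN z hz hz0 0 (r + 1 - α) (by omega) (by omega)
    rwa [if_pos rfl] at h
  refine ⟨?_, ?_, ?_, ?_⟩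
  · intro p hp hpα
    show w ^ _ * _ = 0
    rw [show (∑ I ∈ Finset.powersetCard α (Finset.univ : Finset (Fin (r + 1))),
        (∏ i ∈ I, z i) ^ (-(p : ℤ)) * aI z I *
          (fun _ => (1:K)) (fun i => w ^ ((2 * I.card : ℤ))
            * (if i ∈ I then w ^ (-(2 : ℤ) * ((r : ℤ) + 1)) else 1) * z i))
        = 0 from by
      rw [← hzero p hp hpα]
      exact Finset.sum_congr rfl fun I _ => mul_one _]
    rw [mul_zero]
  · show w ^ _ * _ = _
    rw [show (∑ I ∈ Finset.powersetCard α (Finset.univ : Finset (Fin (r + 1))),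
        (∏ i ∈ I, z i) ^ (0 : ℤ) * aI z I *
          (fun _ => (1:K)) (fun i => w ^ ((2 * I.card : ℤ))
            * (if i ∈ I then w ^ (-(2 : ℤ) * ((r : ℤ) + 1)) else 1) * z i))
        = 1 from by
      rw [Finset.sum_congr rfl fun I _ => mul_one ((∏ i ∈ I, z i) ^ (0 : ℤ) * aI z I)]
      exact hone]
    rw [mul_one]
    congr 1
    ring
  · intro p hp hpα
    show (∑ I ∈ Finset.powersetCard α (Finset.univ : Finset (Fin (r + 1))),
        (∏ i ∈ I, z i) ^ (-(p : ℤ)) * aI z I *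
          (fun _ => (1:K)) (fun i => (if i ∈ I then q else 1) * z i)) = 0
    rw [← hzero p hp hpα]
    exact Finset.sum_congr rfl fun I _ => mul_one _
  · show (∑ I ∈ Finset.powersetCard α (Finset.univ : Finset (Fin (r + 1))),
        (∏ i ∈ I, z i) ^ (0 : ℤ) * aI z I *
          (fun _ => (1:K)) (fun i => (if i ∈ I then q else 1) * z i)) = 1
    rw [Finset.sum_congr rfl fun I _ => mul_one ((∏ i ∈ I, z i) ^ (0 : ℤ) * aI z I)]
    exact hone
end
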